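/- arXiv:cond-mat/0510472 — 2 statements merged into one kernel-verified Lean document; each statement's English description precedes it below -/
import Mathlib

section
/- Let Σ := ∑_{n≥1} K(n) ≤ 1 and suppose ∑_{n≥1} n K(n) = μ < ∞. Then the free energy of the homogeneous pinning model satisfies F(h_c(0) - δ) ≥ δ/μ' for some constant μ' > 0 and all sufficiently small δ > 0; in particular the transition is first order (the right derivative of F at h_c(0) from the localized side is bounded away from 0). -/
open Filter

private lemma exp_le_one' {t : ℝ} (ht : t ≤ 0) : Real.exp t ≤ 1 := by
  calc Real.exp t ≤ Real.exp 0 := Real.exp_le_exp.2 ht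
  _ = 1 := Real.exp_zero

/-- If `∑ n K(n) = μ < ∞` then `F(h_c(0) - δ) ≥ δ/μ'` for some `μ' > 0` and
all small `δ > 0`: the pure transition is first order. -/
theorem pinning_first_order_of_finite_mean
    (K : ℕ → ℝ) (hKnonneg : ∀ n, 0 ≤ K n)
    (hSpos : 0 < ∑' n : ℕ, K (n + 1)) (hSle : ∑' n : ℕ, K (n + 1) ≤ 1)
    (hmean : Summable (fun n : ℕ => (n : ℝ) * K n))
    (F : ℝ → ℝ) (hFnonneg : ∀ h, 0 ≤ F h)
    (hFsol : ∀ h : ℝ,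
      (∃ x : ℝ, 0 ≤ x ∧
        ∑' n : ℕ, K (n + 1) * Real.exp (-h) * Real.exp (-x * (n + 1)) = 1) →
      ∑' n : ℕ, K (n + 1) * Real.exp (-h) * Real.exp (-(F h) * (n + 1)) = 1)
    (hFnosol : ∀ h : ℝ,
      (¬ ∃ x : ℝ, 0 ≤ x ∧
        ∑' n : ℕ, K (n + 1) * Real.exp (-h) * Real.exp (-x * (n + 1)) = 1) →
      F h = 0) :
    ∃ μ' : ℝ, 0 < μ' ∧ ∃ δ₀ : ℝ, 0 < δ₀ ∧ ∀ δ : ℝ, 0 < δ → δ ≤ δ₀ →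
      δ / μ' ≤ F (Real.log (∑' n : ℕ, K (n + 1)) - δ) := by
  set S := ∑' n : ℕ, K (n + 1) with hSdef
  have hμsum : Summable (fun n : ℕ => ((n : ℝ) + 1) * K (n + 1)) := by
    have h1 := (summable_nat_add_iff (f := fun n : ℕ => (n : ℝ) * K n) 1).2 hmean
    exact h1.congr (fun n => by push_cast; ring)
  have hK1sum : Summable (fun n : ℕ => K (n + 1)) :=
    hμsum.of_nonneg_of_le (fun n => hKnonneg _)
      (fun n => le_mul_of_one_le_left (hKnonneg _)
        (le_add_of_nonneg_left (n.cast_nonneg)))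
  set μ₁ := ∑' n : ℕ, ((n : ℝ) + 1) * K (n + 1) with hμdef
  have hSμ : S ≤ μ₁ := Summable.tsum_le_tsum
    (fun n => le_mul_of_one_le_left (hKnonneg _) (le_add_of_nonneg_left (n.cast_nonneg)))
    hK1sum hμsum
  have hμpos : 0 < μ₁ := lt_of_lt_of_le hSpos hSμ
  refine ⟨Real.exp 1 * μ₁ / S, by positivity, 1, one_pos, ?_⟩
  intro δ hδ hδ1
  set h := Real.log S - δ with hh
  set c := Real.exp (-h) with hcdef
  have hcpos : 0 < c := Real.exp_pos _
  have hc : c = Real.exp δ / S := by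
    rw [hcdef, hh, neg_sub, Real.exp_sub, Real.exp_log hSpos]
  -- existence of a solution
  have hsumc : Summable (fun n : ℕ => K (n + 1) * c) := hK1sum.mul_right c
  set G : ℝ → ℝ := fun x => ∑' n : ℕ, K (n + 1) * c * Real.exp (-(max x 0) * ((n : ℝ) + 1))
    with hGdef
  have hGcont : Continuous G := by
    apply continuous_tsum (u := fun n : ℕ => K (n + 1) * c)
    · intro n
      fun_prop
    · exact hsumc
    · intro n x
      rw [Real.norm_eq_abs, abs_of_nonneg
        (mul_nonneg (mul_nonneg (hKnonneg _) hcpos.le) (Real.exp_nonneg _))]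
      have : Real.exp (-(max x 0) * ((n : ℝ) + 1)) ≤ 1 := by
        apply exp_le_one'
        have h1 : 0 ≤ max x 0 := le_max_right _ _
        nlinarith [(n.cast_nonneg : (0:ℝ) ≤ n)]
      nlinarith [mul_nonneg (hKnonneg (n + 1)) hcpos.le]
  have hG0 : G 0 = Real.exp δ := by
    rw [hGdef]
    simp only [max_self, neg_zero, zero_mul, Real.exp_zero, mul_one]
    rw [tsum_mul_right, ← hSdef, hc, mul_comm, div_mul_cancel₀ _ hSpos.ne']
  have hGx0 : G (δ + 1) ≤ Real.exp (-1) := by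
    have hmax : max (δ + 1) 0 = δ + 1 := max_eq_left (by linarith)
    have hbound : ∀ n : ℕ, K (n + 1) * c * Real.exp (-(max (δ + 1) 0) * ((n : ℝ) + 1))
        ≤ K (n + 1) * c * Real.exp (-(δ + 1)) := by
      intro n
      have he : Real.exp (-(max (δ + 1) 0) * ((n : ℝ) + 1)) ≤ Real.exp (-(δ + 1)) := by
        apply Real.exp_le_exp.2
        rw [hmax]
        nlinarith [(n.cast_nonneg : (0:ℝ) ≤ n)]
      exact mul_le_mul_of_nonneg_left he (mul_nonneg (hKnonneg _) hcpos.le)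
    have hsum2 : Summable (fun n : ℕ => K (n + 1) * c * Real.exp (-(δ + 1))) :=
      hsumc.mul_right _
    have hsum1 : Summable (fun n : ℕ =>
        K (n + 1) * c * Real.exp (-(max (δ + 1) 0) * ((n : ℝ) + 1))) :=
      hsum2.of_nonneg_of_le
        (fun n => mul_nonneg (mul_nonneg (hKnonneg _) hcpos.le) (Real.exp_nonneg _)) hbound
    calc G (δ + 1) ≤ ∑' n : ℕ, K (n + 1) * c * Real.exp (-(δ + 1)) :=
          Summable.tsum_le_tsum hbound hsum1 hsum2
    _ = S * c * Real.exp (-(δ + 1)) := by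
          rw [tsum_mul_right, tsum_mul_right, ← hSdef]
    _ = Real.exp (-1) := by
          rw [hc]
          field_simp
          rw [← Real.exp_add]
          ring_nf
  have hexp1 : Real.exp (-1) < 1 := by
    calc Real.exp (-1) < Real.exp 0 := Real.exp_lt_exp.2 (by norm_num)
    _ = 1 := Real.exp_zero
  have hivt : ∃ x ∈ Set.Icc (0 : ℝ) (δ + 1), G x = 1 := by
    have hmem : (1 : ℝ) ∈ Set.Icc (G (δ + 1)) (G 0) :=
      ⟨le_trans hGx0 hexp1.le, by rw [hG0]; exact Real.one_le_exp hδ.le⟩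
    have := intermediate_value_Icc' (by linarith : (0 : ℝ) ≤ δ + 1) hGcont.continuousOn hmem
    obtain ⟨x, hx, hgx⟩ := this
    exact ⟨x, hx, hgx⟩
  obtain ⟨x, hx, hgx⟩ := hivt
  have hsol : ∃ y : ℝ, 0 ≤ y ∧
      ∑' n : ℕ, K (n + 1) * Real.exp (-h) * Real.exp (-y * ((n : ℝ) + 1)) = 1 := by
    refine ⟨x, hx.1, ?_⟩
    have hmx : max x 0 = x := max_eq_left hx.1
    rw [hGdef] at hgx
    simp only [hmx] at hgx
    rw [hcdef] at hgx
    exact hgx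
  have hE := hFsol h hsol
  rw [← hcdef] at hE
  set F₀ := F h with hF0def
  have hF0 : 0 ≤ F₀ := hFnonneg h
  -- summability of the equation terms
  have hsum1 : Summable (fun n : ℕ => K (n + 1) * c * Real.exp (-F₀ * ((n : ℝ) + 1))) := by
    apply hsumc.of_nonneg_of_le
      (fun n => mul_nonneg (mul_nonneg (hKnonneg _) hcpos.le) (Real.exp_nonneg _))
    intro n
    have : Real.exp (-F₀ * ((n : ℝ) + 1)) ≤ 1 := by
      apply exp_le_one'
      nlinarith [(n.cast_nonneg : (0:ℝ) ≤ n)]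
    nlinarith [mul_nonneg (hKnonneg (n + 1)) hcpos.le]
  have hLsum : Summable (fun n : ℕ => K (n + 1) * c - c * F₀ * (((n : ℝ) + 1) * K (n + 1))) :=
    (hK1sum.mul_right c).sub (hμsum.mul_left (c * F₀))
  have hle : ∑' n : ℕ, (K (n + 1) * c - c * F₀ * (((n : ℝ) + 1) * K (n + 1))) ≤ 1 := by
    refine le_of_le_of_eq (Summable.tsum_le_tsum ?_ hLsum hsum1) hE
    intro n
    have t := Real.add_one_le_exp (-F₀ * ((n : ℝ) + 1))
    have hKc : 0 ≤ K (n + 1) * c := mul_nonneg (hKnonneg _) hcpos.le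
    nlinarith [mul_le_mul_of_nonneg_left t hKc]
  have hsplit : ∑' n : ℕ, (K (n + 1) * c - c * F₀ * (((n : ℝ) + 1) * K (n + 1)))
      = c * S - c * F₀ * μ₁ := by
    rw [Summable.tsum_sub (hK1sum.mul_right c) (hμsum.mul_left (c * F₀)),
      tsum_mul_right, tsum_mul_left, ← hSdef, ← hμdef]
    ring
  rw [hsplit] at hle
  -- conclude
  have key2 : Real.exp δ * S - Real.exp δ * F₀ * μ₁ ≤ S := by
    rw [hc] at hle
    have := mul_le_mul_of_nonneg_left hle hSpos.le
    calc Real.exp δ * S - Real.exp δ * F₀ * μ₁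
        = S * (Real.exp δ / S * S - Real.exp δ / S * F₀ * μ₁) := by
          field_simp
    _ ≤ S * 1 := this
    _ = S := mul_one S
  have h3 : F₀ * μ₁ * Real.exp δ ≤ F₀ * μ₁ * Real.exp 1 :=
    mul_le_mul_of_nonneg_left (Real.exp_le_exp.2 hδ1) (mul_nonneg hF0 hμpos.le)
  have h5 : S * δ ≤ S * (Real.exp δ - 1) :=
    mul_le_mul_of_nonneg_left (by linarith [Real.add_one_le_exp δ]) hSpos.le
  rw [div_div_eq_mul_div, div_le_iff₀ (by positivity)]
  nlinarith [key2, h3, h5]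
end

section
/- Suppose K(n) = C n^{-α} (1 + o(1)) with 1 < α < 2 and C > 0. Then as δ ↓ 0, the free energy of the homogeneous pinning model satisfies F(h_c(0) - δ) = δ^{1/(α-1)} · (L(δ)) where L(δ) is bounded above and below by positive constants; in particular F(h_c(0)-δ)/δ → 0, so the transition is of order higher than one. -/
open Filter MeasureTheory Set

set_option maxHeartbeats 1000000

lemma pin_mul_min (c a b : ℝ) (hc : 0 ≤ c) : c * min a b = min (c*a) (c*b) := by
  rcases le_total a b with h | h
  · rw [min_eq_left h, min_eq_left (mul_le_mul_of_nonneg_left h hc)]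
  · rw [min_eq_right h, min_eq_right (mul_le_mul_of_nonneg_left h hc)]

lemma pin_sum_min_bound (α : ℝ) (hα₁ : 1 < α) (hα₂ : α < 2) (x : ℝ) (hx : 0 < x) (hx1 : x ≤ 1) :
    ∑' n : ℕ, min (((n:ℝ)+1) ^ (-α)) (x * ((n:ℝ)+1) ^ (1-α))
      ≤ (1 + 1/(2-α) + 1/(α-1)) * x ^ (α-1) := by
  have hα0 : (0:ℝ) < α - 1 := by linarith
  have h2α : (0:ℝ) < 2 - α := by linarith
  set f : ℝ → ℝ := fun t => min (t ^ (-α)) (x * t ^ (1-α)) with hf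
  have hfnn : ∀ t : ℝ, 0 ≤ t → 0 ≤ f t := fun t ht =>
    le_min (Real.rpow_nonneg ht _) (mul_nonneg hx.le (Real.rpow_nonneg ht _))
  have hant : AntitoneOn f (Ici (1:ℝ)) := by
    intro s hs t ht hst
    have hs0 : (0:ℝ) < s := lt_of_lt_of_le one_pos hs
    exact min_le_min (Real.rpow_le_rpow_of_nonpos hs0 hst (by linarith))
      (mul_le_mul_of_nonneg_left (Real.rpow_le_rpow_of_nonpos hs0 hst (by linarith)) hx.le)
  have hcont : ContinuousOn f (Ici (1:ℝ)) := by
    intro t ht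
    have h0 : t ≠ 0 := by intro h; rw [h] at ht; simp at ht; linarith
    have c1 : ContinuousAt (fun t : ℝ => t ^ (-α)) t := Real.continuousAt_rpow_const t _ (Or.inl h0)
    have c2 : ContinuousAt (fun t : ℝ => x * t ^ (1-α)) t :=
      (Real.continuousAt_rpow_const t _ (Or.inl h0)).const_mul x
    have c3 : ContinuousAt f t := Tendsto.min c1 c2
    exact c3.continuousWithinAt
  have hint : IntegrableOn f (Ioi (1:ℝ)) := by
    refine Integrable.mono' (g := fun t => t ^ (-α))
      (integrableOn_Ioi_rpow_of_lt (by linarith) one_pos)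
      ((hcont.mono (Ioi_subset_Ici le_rfl)).aestronglyMeasurable measurableSet_Ioi) ?_
    filter_upwards [ae_restrict_mem measurableSet_Ioi] with t ht
    rw [Real.norm_eq_abs, abs_of_nonneg (hfnn t (zero_lt_one.trans ht).le)]
    exact min_le_left _ _
  -- tail integral bound
  have hy1 : (1:ℝ) ≤ x⁻¹ := by
    rw [le_inv_comm₀ one_pos hx]; simpa using hx1
  have hy0 : (0:ℝ) < x⁻¹ := by positivity
  have hIoi : ∫ t in Ioi (1:ℝ), f t ≤ (1/(2-α) + 1/(α-1)) * x ^ (α-1) := by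
    have hsplit : Ioc (1:ℝ) x⁻¹ ∪ Ioi x⁻¹ = Ioi 1 := Ioc_union_Ioi_eq_Ioi hy1
    have hi1 : IntegrableOn f (Ioc (1:ℝ) x⁻¹) :=
      hint.mono_set (by rw [← hsplit]; exact subset_union_left)
    have hi2 : IntegrableOn f (Ioi x⁻¹) :=
      hint.mono_set (by rw [← hsplit]; exact subset_union_right)
    rw [← hsplit, setIntegral_union (Ioc_disjoint_Ioi le_rfl) measurableSet_Ioi hi1 hi2]
    have part1 : ∫ t in Ioc (1:ℝ) x⁻¹, f t ≤ 1/(2-α) * x ^ (α-1) := by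
      have hg : IntegrableOn (fun t : ℝ => x * t ^ (1-α)) (Ioc (1:ℝ) x⁻¹) := by
        apply IntegrableOn.mono_set _ Ioc_subset_Icc_self
        apply ContinuousOn.integrableOn_Icc
        intro t ht
        have h0 : t ≠ 0 := by intro h; rw [h] at ht; exact absurd ht.1 (by norm_num)
        have c2 : ContinuousAt (fun t : ℝ => x * t ^ (1-α)) t :=
          (Real.continuousAt_rpow_const t _ (Or.inl h0)).const_mul x
        exact ContinuousAt.continuousWithinAt c2
      calc ∫ t in Ioc (1:ℝ) x⁻¹, f t ≤ ∫ t in Ioc (1:ℝ) x⁻¹, x * t ^ (1-α) :=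
            setIntegral_mono_on hi1 hg measurableSet_Ioc (fun t ht => min_le_right _ _)
        _ = ∫ t in (1:ℝ)..x⁻¹, x * t ^ (1-α) := by
            rw [intervalIntegral.integral_of_le hy1]
        _ = x * ((x⁻¹ ^ ((1-α)+1) - 1 ^ ((1-α)+1)) / ((1-α)+1)) := by
            rw [intervalIntegral.integral_const_mul, integral_rpow (Or.inl (by linarith))]
        _ ≤ 1/(2-α) * x ^ (α-1) := by
            rw [Real.one_rpow]
            have h1 : (1-α) + 1 = 2 - α := by ring
            rw [h1]
            have h2 : x⁻¹ ^ (2-α) = x ^ (α-2) := by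
              rw [Real.inv_rpow hx.le, ← Real.rpow_neg hx.le]
              congr 1; ring
            rw [h2]
            have hxx : x * x ^ (α-2) = x ^ (α-1) := by
              nth_rewrite 1 [← Real.rpow_one x]
              rw [← Real.rpow_add hx]; congr 1; ring
            have key : x * ((x ^ (α-2) - 1) / (2-α)) = (x ^ (α-1) - x)/(2-α) := by
              rw [← hxx]; ring
            rw [key]
            calc (x ^ (α-1) - x)/(2-α) ≤ x ^ (α-1)/(2-α) := by gcongr; linarith
              _ = 1/(2-α) * x ^ (α-1) := by ring
    have part2 : ∫ t in Ioi x⁻¹, f t ≤ 1/(α-1) * x ^ (α-1) := by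
      calc ∫ t in Ioi x⁻¹, f t ≤ ∫ t in Ioi x⁻¹, t ^ (-α) :=
            setIntegral_mono_on hi2 (integrableOn_Ioi_rpow_of_lt (by linarith) hy0)
              measurableSet_Ioi (fun t ht => min_le_left _ _)
        _ = -x⁻¹ ^ (-α+1)/(-α+1) := integral_Ioi_rpow_of_lt (by linarith) hy0
        _ = 1/(α-1) * x ^ (α-1) := by
            have h2 : x⁻¹ ^ (-α+1) = x ^ (α-1) := by
              rw [Real.inv_rpow hx.le, ← Real.rpow_neg hx.le]; congr 1; ring
            rw [h2, show (-α+1:ℝ) = -(α-1) by ring, neg_div_neg_eq]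
            ring
    calc (∫ t in Ioc (1:ℝ) x⁻¹, f t) + ∫ t in Ioi x⁻¹, f t
        ≤ 1/(2-α) * x ^ (α-1) + 1/(α-1) * x ^ (α-1) := add_le_add part1 part2
      _ = (1/(2-α) + 1/(α-1)) * x ^ (α-1) := by ring
  -- now the sum
  have hx_le : x ≤ x ^ (α-1) := by
    nth_rewrite 1 [← Real.rpow_one x]
    exact Real.rpow_le_rpow_of_exponent_ge hx hx1 (by linarith)
  have hInn : 0 ≤ ∫ t in Ioi (1:ℝ), f t := by
    apply setIntegral_nonneg measurableSet_Ioi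
    intro t ht
    exact hfnn t (zero_lt_one.trans ht).le
  apply Real.tsum_le_of_sum_range_le
  · intro n
    exact hfnn _ (by positivity)
  · intro N
    have hfinal : x + ∫ t in Ioi (1:ℝ), f t ≤ (1 + 1/(2-α) + 1/(α-1)) * x ^ (α-1) := by
      calc x + ∫ t in Ioi (1:ℝ), f t ≤ x ^ (α-1) + (1/(2-α) + 1/(α-1)) * x ^ (α-1) :=
            add_le_add hx_le hIoi
        _ = (1 + 1/(2-α) + 1/(α-1)) * x ^ (α-1) := by ring
    cases N with
    | zero =>
      simp only [Finset.range_zero, Finset.sum_empty]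
      positivity
    | succ M =>
      rw [Finset.sum_range_succ']
      have h0 : min ((((0:ℕ):ℝ)+1) ^ (-α)) (x * (((0:ℕ):ℝ)+1) ^ (1-α)) = x := by
        simp only [Nat.cast_zero, zero_add, Real.one_rpow, mul_one]
        exact min_eq_right hx1
      rw [h0]
      have hsum : ∑ i ∈ Finset.range M,
          min ((((i+1:ℕ):ℝ)+1) ^ (-α)) (x * (((i+1:ℕ):ℝ)+1) ^ (1-α))
          ≤ ∫ t in Ioi (1:ℝ), f t := by
        have hcongr : ∀ i : ℕ, min ((((i+1:ℕ):ℝ)+1) ^ (-α)) (x * (((i+1:ℕ):ℝ)+1) ^ (1-α))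
            = f ((1:ℝ) + ((i+1:ℕ):ℝ)) := by
          intro i
          show _ = min _ _
          push_cast
          ring_nf
        calc ∑ i ∈ Finset.range M,
            min ((((i+1:ℕ):ℝ)+1) ^ (-α)) (x * (((i+1:ℕ):ℝ)+1) ^ (1-α))
            = ∑ i ∈ Finset.range M, f ((1:ℝ) + ((i+1:ℕ):ℝ)) :=
              Finset.sum_congr rfl (fun i _ => hcongr i)
          _ ≤ ∫ t in (1:ℝ)..(1 + (M:ℕ)), f t :=
              (hant.mono (Icc_subset_Ici_self)).sum_le_integral
          _ ≤ ∫ t in Ioi (1:ℝ), f t := by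
              rw [intervalIntegral.integral_of_le (le_add_of_nonneg_right (Nat.cast_nonneg M))]
              apply setIntegral_mono_set hint
              · filter_upwards [ae_restrict_mem measurableSet_Ioi] with t ht
                exact hfnn t (zero_lt_one.trans ht).le
              · exact (Ioc_subset_Ioi_self).eventuallyLE
      calc (∑ i ∈ Finset.range M,
            min ((((i+1:ℕ):ℝ)+1) ^ (-α)) (x * (((i+1:ℕ):ℝ)+1) ^ (1-α))) + x
          ≤ (∫ t in Ioi (1:ℝ), f t) + x := add_le_add hsum le_rfl
        _ = x + ∫ t in Ioi (1:ℝ), f t := by ring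
        _ ≤ (1 + 1/(2-α) + 1/(α-1)) * x ^ (α-1) := hfinal


/-- If `K(n) ~ C n^{-α}` with `1 < α < 2`, then
`F(h_c(0) - δ) ≍ δ^{1/(α-1)}` as `δ ↓ 0`; in particular
`F(h_c(0) - δ)/δ → 0`, so the pure transition is of order higher than one. -/
theorem pinning_higher_order_transition
    (K : ℕ → ℝ) (hKnonneg : ∀ n, 0 ≤ K n)
    (hSpos : 0 < ∑' n : ℕ, K (n + 1)) (hSle : ∑' n : ℕ, K (n + 1) ≤ 1)
    (C α : ℝ) (hC : 0 < C) (hα₁ : 1 < α) (hα₂ : α < 2)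
    (hasym : Tendsto (fun n : ℕ => K n * (n : ℝ) ^ α) atTop (nhds C))
    (F : ℝ → ℝ) (hFnonneg : ∀ h, 0 ≤ F h)
    (hFsol : ∀ h : ℝ,
      (∃ x : ℝ, 0 ≤ x ∧
        ∑' n : ℕ, K (n + 1) * Real.exp (-h) * Real.exp (-x * (n + 1)) = 1) →
      ∑' n : ℕ, K (n + 1) * Real.exp (-h) * Real.exp (-(F h) * (n + 1)) = 1)
    (hFnosol : ∀ h : ℝ,
      (¬ ∃ x : ℝ, 0 ≤ x ∧
        ∑' n : ℕ, K (n + 1) * Real.exp (-h) * Real.exp (-x * (n + 1)) = 1) →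
      F h = 0) :
    (∃ c₁ c₂ δ₀ : ℝ, 0 < c₁ ∧ 0 < c₂ ∧ 0 < δ₀ ∧ ∀ δ : ℝ, 0 < δ → δ ≤ δ₀ →
      c₁ * δ ^ (1 / (α - 1)) ≤ F (Real.log (∑' n : ℕ, K (n + 1)) - δ) ∧
      F (Real.log (∑' n : ℕ, K (n + 1)) - δ) ≤ c₂ * δ ^ (1 / (α - 1))) ∧
    Tendsto (fun δ : ℝ => F (Real.log (∑' n : ℕ, K (n + 1)) - δ) / δ)
      (nhdsWithin 0 (Set.Ioi 0)) (nhds 0) := by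
  have hα0 : (0:ℝ) < α - 1 := by linarith
  have h2α : (0:ℝ) < 2 - α := by linarith
  set S := ∑' n : ℕ, K (n + 1) with hSdef
  -- p-series summability
  have hps : Summable (fun n : ℕ => ((n:ℝ)+1) ^ (-α)) := by
    have h1 : Summable (fun n : ℕ => ((n+1:ℕ):ℝ) ^ (-α)) :=
      (summable_nat_add_iff 1).mpr (Real.summable_nat_rpow.mpr (by linarith))
    refine h1.congr fun n => ?_
    push_cast
    rfl
  -- constants from the asymptotics
  have hev : ∀ᶠ n : ℕ in atTop, K n * (n:ℝ)^α ∈ Set.Ioo (C/2) (C+1) :=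
    hasym (Ioo_mem_nhds (by linarith) (by linarith))
  obtain ⟨N₀', hN₀'⟩ := eventually_atTop.mp hev
  set N₀ := max N₀' 1 with hN₀def
  have hN₀1 : 1 ≤ N₀ := le_max_right _ _
  have hN₀R : (1:ℝ) ≤ (N₀:ℝ) := by exact_mod_cast hN₀1
  have hbounds : ∀ n : ℕ, N₀ ≤ n → C/2 * (n:ℝ)^(-α) ≤ K n ∧ K n ≤ (C+1) * (n:ℝ)^(-α) := by
    intro n hn
    have hn' : N₀' ≤ n := le_trans (le_max_left _ _) hn
    have hnR : (1:ℝ) ≤ (n:ℝ) := le_trans hN₀R (by exact_mod_cast hn)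
    have hpow : (0:ℝ) < (n:ℝ)^α := Real.rpow_pos_of_pos (by linarith) α
    obtain ⟨hlo, hhi⟩ := hN₀' n hn'
    have hneg : (n:ℝ)^(-α) = ((n:ℝ)^α)⁻¹ := by
      rw [Real.rpow_neg (by linarith)]
    constructor
    · rw [hneg]
      calc C/2 * ((n:ℝ)^α)⁻¹ ≤ (K n * (n:ℝ)^α) * ((n:ℝ)^α)⁻¹ := by
            apply mul_le_mul_of_nonneg_right hlo.le (by positivity)
        _ = K n := by field_simp
    · rw [hneg]
      calc K n = (K n * (n:ℝ)^α) * ((n:ℝ)^α)⁻¹ := by field_simp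
        _ ≤ (C+1) * ((n:ℝ)^α)⁻¹ := by
            apply mul_le_mul_of_nonneg_right hhi.le (by positivity)
  -- global upper constant
  set B := (∑ i ∈ Finset.range (N₀+1), K i) + 1 with hBdef
  have hBpos : 0 < B := by
    have : 0 ≤ ∑ i ∈ Finset.range (N₀+1), K i :=
      Finset.sum_nonneg fun i _ => hKnonneg i
    linarith
  set C₂ := max (C+1) (B * (N₀:ℝ)^α) with hC₂def
  have hC₂pos : 0 < C₂ :=
    lt_of_lt_of_le (by positivity : (0:ℝ) < B * (N₀:ℝ)^α) (le_max_right _ _)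
  have hC₂ : ∀ n : ℕ, K (n+1) ≤ C₂ * ((n:ℝ)+1)^(-α) := by
    intro n
    have hm1 : (1:ℝ) ≤ ((n:ℝ)+1) := le_add_of_nonneg_left (Nat.cast_nonneg n)
    have hmpos : (0:ℝ) < ((n:ℝ)+1) := by positivity
    have hcast : ((n+1:ℕ):ℝ) = (n:ℝ)+1 := by push_cast; ring
    rcases le_or_gt N₀ (n+1) with hge | hlt
    · have := (hbounds (n+1) hge).2
      rw [hcast] at this
      calc K (n+1) ≤ (C+1) * ((n:ℝ)+1)^(-α) := this
        _ ≤ C₂ * ((n:ℝ)+1)^(-α) := by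
            apply mul_le_mul_of_nonneg_right (le_max_left _ _) (Real.rpow_nonneg (by positivity) _)
    · -- n+1 < N₀, so K (n+1) ≤ B and (n+1) ≤ N₀
      have hKB : K (n+1) ≤ B := by
        have hmem : n+1 ∈ Finset.range (N₀+1) := Finset.mem_range.mpr (by omega)
        have := Finset.single_le_sum (fun i _ => hKnonneg i) hmem
        linarith
      have hle : ((n:ℝ)+1) ≤ (N₀:ℝ) := by
        rw [← hcast]; exact_mod_cast hlt.le
      have hmono : (N₀:ℝ)^(-α) ≤ ((n:ℝ)+1)^(-α) :=
        Real.rpow_le_rpow_of_nonpos hmpos hle (by linarith)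
      have hone : (N₀:ℝ)^α * (N₀:ℝ)^(-α) = 1 := by
        rw [← Real.rpow_add (by linarith)]
        simp
      calc K (n+1) ≤ B := hKB
        _ = B * ((N₀:ℝ)^α * (N₀:ℝ)^(-α)) := by rw [hone, mul_one]
        _ = (B * (N₀:ℝ)^α) * (N₀:ℝ)^(-α) := by ring
        _ ≤ (B * (N₀:ℝ)^α) * ((n:ℝ)+1)^(-α) := by
            apply mul_le_mul_of_nonneg_left hmono (by positivity)
        _ ≤ C₂ * ((n:ℝ)+1)^(-α) := by
            apply mul_le_mul_of_nonneg_right (le_max_right _ _) (Real.rpow_nonneg (by positivity) _)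
  have hKsum : Summable (fun n : ℕ => K (n+1)) :=
    Summable.of_nonneg_of_le (fun n => hKnonneg _) hC₂ (hps.mul_left C₂)
  -- the function P x = ∑ K(n+1) (1 - e^{-x(n+1)})
  set P : ℝ → ℝ := fun x => ∑' n : ℕ, K (n+1) * (1 - Real.exp (-x * ((n:ℝ)+1))) with hPdef
  have hterm_nonneg : ∀ x : ℝ, 0 ≤ x → ∀ n : ℕ,
      0 ≤ K (n+1) * (1 - Real.exp (-x * ((n:ℝ)+1))) := by
    intro x hx n
    apply mul_nonneg (hKnonneg _)
    have h1 : (0:ℝ) ≤ x * ((n:ℝ)+1) := by positivity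
    have h2 : Real.exp (-(x * ((n:ℝ)+1))) ≤ 1 := Real.exp_le_one_iff.mpr (by linarith)
    rw [neg_mul] at *
    linarith
  have hterm_le : ∀ x : ℝ, ∀ n : ℕ,
      K (n+1) * (1 - Real.exp (-x * ((n:ℝ)+1))) ≤ K (n+1) := by
    intro x n
    apply mul_le_of_le_one_right (hKnonneg _)
    have := Real.exp_pos (-x * ((n:ℝ)+1))
    linarith
  have hPsummable : ∀ x : ℝ, 0 ≤ x →
      Summable (fun n : ℕ => K (n+1) * (1 - Real.exp (-x * ((n:ℝ)+1)))) :=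
    fun x hx => Summable.of_nonneg_of_le (hterm_nonneg x hx) (hterm_le x) hKsum
  have hPmono : ∀ x y : ℝ, 0 ≤ x → x ≤ y → P x ≤ P y := by
    intro x y hx hxy
    apply Summable.tsum_le_tsum _ (hPsummable x hx) (hPsummable y (le_trans hx hxy))
    intro n
    have hn : (0:ℝ) ≤ (n:ℝ)+1 := by positivity
    have key : Real.exp (-y * ((n:ℝ)+1)) ≤ Real.exp (-x * ((n:ℝ)+1)) := by
      apply Real.exp_le_exp.mpr
      have h2 := mul_le_mul_of_nonneg_right hxy hn
      linarith
    apply mul_le_mul_of_nonneg_left _ (hKnonneg _)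
    linarith
  -- key identity : P (F (log S - δ)) = S (1 - e^{-δ})
  have hkey : ∀ δ : ℝ, 0 < δ → P (F (Real.log S - δ)) = S * (1 - Real.exp (-δ)) := by
    intro δ hδ
    set h := Real.log S - δ with hhdef
    have heh : Real.exp (-h) = Real.exp δ / S := by
      rw [hhdef, neg_sub, Real.exp_sub, Real.exp_log hSpos]
    -- existence of a solution
    set G : ℝ → ℝ := fun x => ∑' n : ℕ, K (n+1) * Real.exp (-|x| * ((n:ℝ)+1)) with hGdef
    have hGbound : ∀ (n : ℕ) (x : ℝ), ‖K (n+1) * Real.exp (-|x| * ((n:ℝ)+1))‖ ≤ K (n+1) := by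
      intro n x
      rw [Real.norm_eq_abs, abs_of_nonneg (mul_nonneg (hKnonneg _) (Real.exp_pos _).le)]
      apply mul_le_of_le_one_right (hKnonneg _)
      apply Real.exp_le_one_iff.mpr
      have h1 : (0:ℝ) ≤ |x| * ((n:ℝ)+1) := by positivity
      linarith
    have hGsummand : ∀ (x : ℝ), Summable (fun n : ℕ => K (n+1) * Real.exp (-|x| * ((n:ℝ)+1))) := by
      intro x
      apply Summable.of_nonneg_of_le (fun n => mul_nonneg (hKnonneg _) (Real.exp_pos _).le)
        (fun n => ?_) hKsum
      have := hGbound n x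
      rwa [Real.norm_eq_abs, abs_of_nonneg (mul_nonneg (hKnonneg _) (Real.exp_pos _).le)] at this
    have hGcont : Continuous G := by
      apply continuous_tsum _ hKsum hGbound
      intro n
      exact Continuous.mul continuous_const
        (Real.continuous_exp.comp ((continuous_abs.neg).mul continuous_const))
    have hG0 : G 0 = S := by
      simp [hGdef, hSdef]
    have hGδ : G δ ≤ S * Real.exp (-δ) := by
      have hstep : ∀ n : ℕ, K (n+1) * Real.exp (-|δ| * ((n:ℝ)+1)) ≤ K (n+1) * Real.exp (-δ) := by
        intro n
        apply mul_le_mul_of_nonneg_left _ (hKnonneg _)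
        apply Real.exp_le_exp.mpr
        rw [abs_of_nonneg hδ.le]
        have hn : (1:ℝ) ≤ (n:ℝ)+1 := le_add_of_nonneg_left (Nat.cast_nonneg n)
        have h2 := mul_le_mul_of_nonneg_left hn hδ.le
        rw [mul_one] at h2
        linarith
      calc G δ ≤ ∑' n : ℕ, K (n+1) * Real.exp (-δ) :=
            Summable.tsum_le_tsum hstep (hGsummand δ) (hKsum.mul_right _)
        _ = S * Real.exp (-δ) := by rw [tsum_mul_right]
    have hmemv : S * Real.exp (-δ) ∈ Icc (G δ) (G 0) := by
      refine ⟨hGδ, ?_⟩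
      rw [hG0]
      have h1 : Real.exp (-δ) ≤ 1 := Real.exp_le_one_iff.mpr (by linarith)
      exact mul_le_of_le_one_right hSpos.le h1
    obtain ⟨x, hxmem, hGx⟩ := intermediate_value_Icc' hδ.le hGcont.continuousOn hmemv
    have hex : ∃ x : ℝ, 0 ≤ x ∧
        ∑' n : ℕ, K (n + 1) * Real.exp (-h) * Real.exp (-x * (n + 1)) = 1 := by
      refine ⟨x, hxmem.1, ?_⟩
      have hrw : ∀ n : ℕ, K (n + 1) * Real.exp (-h) * Real.exp (-x * ((n:ℝ) + 1))
          = Real.exp (-h) * (K (n+1) * Real.exp (-|x| * ((n:ℝ)+1))) := by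
        intro n
        rw [abs_of_nonneg hxmem.1]
        ring
      calc ∑' n : ℕ, K (n + 1) * Real.exp (-h) * Real.exp (-x * ((n:ℝ) + 1))
          = ∑' n : ℕ, Real.exp (-h) * (K (n+1) * Real.exp (-|x| * ((n:ℝ)+1))) :=
            tsum_congr hrw
        _ = Real.exp (-h) * G x := by rw [tsum_mul_left]
        _ = 1 := by
            rw [hGx, heh, div_mul_eq_mul_div,
              show Real.exp δ * (S * Real.exp (-δ)) = S * (Real.exp δ * Real.exp (-δ)) by ring,
              ← Real.exp_add]
            norm_num
            exact hSpos.ne'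
    have heq := hFsol h hex
    set FF := F h with hFFdef
    -- extract : ∑ K(n+1) e^{-FF (n+1)} = S e^{-δ}
    have hTsum : Summable (fun n : ℕ => K (n+1) * Real.exp (-FF * ((n:ℝ)+1))) := by
      have := hGsummand FF
      rwa [abs_of_nonneg (hFnonneg h)] at this
    have hT : ∑' n : ℕ, K (n+1) * Real.exp (-FF * ((n:ℝ)+1)) = S * Real.exp (-δ) := by
      have hrw : ∀ n : ℕ, K (n + 1) * Real.exp (-h) * Real.exp (-FF * ((n:ℝ) + 1))
          = Real.exp (-h) * (K (n+1) * Real.exp (-FF * ((n:ℝ)+1))) := fun n => by ring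
      rw [tsum_congr hrw, tsum_mul_left] at heq
      have h2 : ∑' n : ℕ, K (n+1) * Real.exp (-FF * ((n:ℝ)+1)) = (Real.exp (-h))⁻¹ := by
        rw [mul_comm] at heq
        exact eq_inv_of_mul_eq_one_left heq
      rw [h2, Real.exp_neg, inv_inv, hhdef, Real.exp_sub, Real.exp_log hSpos,
        Real.exp_neg, div_eq_mul_inv]
    -- conclude
    calc P FF = ∑' n : ℕ, (K (n+1) - K (n+1) * Real.exp (-FF * ((n:ℝ)+1))) := by
          apply tsum_congr; intro n; ring
      _ = S - ∑' n : ℕ, K (n+1) * Real.exp (-FF * ((n:ℝ)+1)) := by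
          rw [Summable.tsum_sub hKsum hTsum]
      _ = S - S * Real.exp (-δ) := by rw [hT]
      _ = S * (1 - Real.exp (-δ)) := by ring
  -- upper estimate for P
  set b := C₂ * (1 + 1/(2-α) + 1/(α-1)) with hbdef
  have hbpos : 0 < b := by
    apply mul_pos hC₂pos
    have h1 : 0 < 1/(2-α) := by positivity
    have h2 : 0 < 1/(α-1) := by positivity
    linarith
  have hupper : ∀ x : ℝ, 0 < x → x ≤ 1 → P x ≤ b * x ^ (α-1) := by
    intro x hx hx1
    have hterm : ∀ n : ℕ, K (n+1) * (1 - Real.exp (-x * ((n:ℝ)+1)))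
        ≤ C₂ * min (((n:ℝ)+1)^(-α)) (x * ((n:ℝ)+1)^(1-α)) := by
      intro n
      have hm : (0:ℝ) < (n:ℝ)+1 := by positivity
      have hexp := Real.add_one_le_exp (-(x * ((n:ℝ)+1)))
      have h1 : 1 - Real.exp (-x * ((n:ℝ)+1)) ≤ min 1 (x * ((n:ℝ)+1)) := by
        apply le_min
        · have := Real.exp_pos (-x * ((n:ℝ)+1)); linarith
        · rw [neg_mul]; linarith
      have h1' : 0 ≤ 1 - Real.exp (-x * ((n:ℝ)+1)) := by
        have h0 : (0:ℝ) ≤ x * ((n:ℝ)+1) := by positivity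
        have := Real.exp_le_one_iff.mpr (show -x * ((n:ℝ)+1) ≤ 0 by rw [neg_mul]; linarith)
        linarith
      calc K (n+1) * (1 - Real.exp (-x * ((n:ℝ)+1)))
          ≤ (C₂ * ((n:ℝ)+1)^(-α)) * min 1 (x * ((n:ℝ)+1)) :=
            mul_le_mul (hC₂ n) h1 h1' (by positivity)
        _ = C₂ * min (((n:ℝ)+1)^(-α)) (x * ((n:ℝ)+1)^(1-α)) := by
            rw [mul_assoc, pin_mul_min _ _ _ (Real.rpow_nonneg hm.le _), mul_one]
            congr 2
            rw [show (1-α) = -α + 1 by ring, Real.rpow_add hm, Real.rpow_one]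
            ring
    have hminsum : Summable (fun n : ℕ => min (((n:ℝ)+1)^(-α)) (x * ((n:ℝ)+1)^(1-α))) := by
      apply Summable.of_nonneg_of_le _ (fun n => min_le_left _ _) hps
      intro n
      exact le_min (Real.rpow_nonneg (by positivity) _)
        (mul_nonneg hx.le (Real.rpow_nonneg (by positivity) _))
    calc P x ≤ ∑' n : ℕ, C₂ * min (((n:ℝ)+1)^(-α)) (x * ((n:ℝ)+1)^(1-α)) :=
          Summable.tsum_le_tsum hterm (hPsummable x hx.le) (hminsum.mul_left C₂)
      _ = C₂ * ∑' n : ℕ, min (((n:ℝ)+1)^(-α)) (x * ((n:ℝ)+1)^(1-α)) := tsum_mul_left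
      _ ≤ C₂ * ((1 + 1/(2-α) + 1/(α-1)) * x ^ (α-1)) :=
          mul_le_mul_of_nonneg_left (pin_sum_min_bound α hα₁ hα₂ x hx hx1) hC₂pos.le
      _ = b * x ^ (α-1) := by rw [hbdef]; ring
  -- lower estimate for P
  have hae : Real.exp (-1:ℝ) < 1 := Real.exp_lt_one_iff.mpr (by norm_num)
  set a := (1 - Real.exp (-1:ℝ)) * (C/2) * (4:ℝ)^(-α) with hadef
  have hapos : 0 < a := by
    apply mul_pos (mul_pos (by linarith) (by linarith))
      (Real.rpow_pos_of_pos (by norm_num) _)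
  set x₀ := (N₀:ℝ)⁻¹ with hx₀def
  have hx₀pos : 0 < x₀ := by rw [hx₀def]; positivity
  have hx₀1 : x₀ ≤ 1 := by rw [hx₀def]; exact inv_le_one_of_one_le₀ hN₀R
  have hlower : ∀ x : ℝ, 0 < x → x ≤ x₀ → a * x ^ (α-1) ≤ P x := by
    intro x hx hxle
    have hxinv1 : (N₀:ℝ) ≤ x⁻¹ := by
      rw [hx₀def] at hxle
      calc (N₀:ℝ) = ((N₀:ℝ)⁻¹)⁻¹ := (inv_inv _).symm
        _ ≤ x⁻¹ := inv_anti₀ hx hxle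
    have hxinv0 : (1:ℝ) ≤ x⁻¹ := le_trans hN₀R hxinv1
    set N := Nat.ceil (x⁻¹ : ℝ) with hNdef
    have hNge : (x⁻¹ : ℝ) ≤ (N:ℝ) := Nat.le_ceil _
    have hNN₀ : N₀ ≤ N := by
      have h1 : (N₀:ℝ) ≤ (N:ℝ) := le_trans hxinv1 hNge
      exact_mod_cast h1
    have hN1R : (1:ℝ) ≤ (N:ℝ) := le_trans hxinv0 hNge
    have hNup : (N:ℝ) ≤ 2 * x⁻¹ := by
      have := Nat.ceil_lt_add_one (show (0:ℝ) ≤ x⁻¹ by positivity)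
      linarith
    have hsub : ∀ n ∈ Finset.Ico N (2*N),
        (1 - Real.exp (-1:ℝ)) * ((C/2) * ((2*(N:ℝ))^(-α)))
          ≤ K (n+1) * (1 - Real.exp (-x * ((n:ℝ)+1))) := by
      intro n hn
      rw [Finset.mem_Ico] at hn
      have hcast : ((n+1:ℕ):ℝ) = (n:ℝ)+1 := by push_cast; ring
      have hnN : (N:ℝ) ≤ (n:ℝ) := by exact_mod_cast hn.1
      have hm2N : (n:ℝ)+1 ≤ 2*(N:ℝ) := by
        have h1 : n+1 ≤ 2*N := hn.2
        exact_mod_cast h1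
      have hmpos : (0:ℝ) < (n:ℝ)+1 := by positivity
      have hK := (hbounds (n+1) (le_trans hNN₀ (by omega))).1
      rw [hcast] at hK
      have hmono : (2*(N:ℝ))^(-α) ≤ ((n:ℝ)+1)^(-α) :=
        Real.rpow_le_rpow_of_nonpos hmpos hm2N (by linarith)
      have hx1 : (1:ℝ) ≤ x * ((n:ℝ)+1) := by
        calc (1:ℝ) = x * x⁻¹ := (mul_inv_cancel₀ hx.ne').symm
          _ ≤ x * ((n:ℝ)+1) := by
              apply mul_le_mul_of_nonneg_left _ hx.le
              linarith
      have hexp : Real.exp (-x * ((n:ℝ)+1)) ≤ Real.exp (-1:ℝ) := by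
        apply Real.exp_le_exp.mpr; rw [neg_mul]; linarith
      have hKn : (C/2) * ((2*(N:ℝ))^(-α)) ≤ K (n+1) :=
        le_trans (mul_le_mul_of_nonneg_left hmono (by linarith)) hK
      calc (1 - Real.exp (-1:ℝ)) * ((C/2) * ((2*(N:ℝ))^(-α)))
          = ((C/2) * ((2*(N:ℝ))^(-α))) * (1 - Real.exp (-1:ℝ)) := by ring
        _ ≤ K (n+1) * (1 - Real.exp (-x * ((n:ℝ)+1))) :=
            mul_le_mul hKn (by linarith) (by linarith) (hKnonneg _)
    have hcard : (Finset.Ico N (2*N)).card = N := by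
      rw [Nat.card_Ico]; omega
    have hfin : (N:ℝ) * ((1 - Real.exp (-1:ℝ)) * ((C/2) * ((2*(N:ℝ))^(-α))))
        ≤ ∑ n ∈ Finset.Ico N (2*N), K (n+1) * (1 - Real.exp (-x * ((n:ℝ)+1))) := by
      have h1 := Finset.card_nsmul_le_sum (Finset.Ico N (2*N)) _ _ hsub
      rwa [hcard, nsmul_eq_mul] at h1
    have htsum : ∑ n ∈ Finset.Ico N (2*N), K (n+1) * (1 - Real.exp (-x * ((n:ℝ)+1))) ≤ P x :=
      Summable.sum_le_tsum _ (fun i _ => hterm_nonneg x hx.le i) (hPsummable x hx.le)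
    have h4x : (0:ℝ) < 4 * x⁻¹ := by positivity
    have h2N : (0:ℝ) < 2 * (N:ℝ) := by linarith
    have hmono2 : (4 * x⁻¹)^(-α) ≤ (2*(N:ℝ))^(-α) :=
      Real.rpow_le_rpow_of_nonpos h2N (by linarith) (by linarith)
    have hprod : x⁻¹ * (4 * x⁻¹)^(-α) ≤ (N:ℝ) * ((2*(N:ℝ))^(-α)) :=
      mul_le_mul hNge hmono2 (Real.rpow_nonneg h4x.le _) (by linarith)
    have hid : x⁻¹ * (4 * x⁻¹)^(-α) = (4:ℝ)^(-α) * x ^ (α-1) := by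
      rw [Real.mul_rpow (by norm_num) (by positivity), Real.inv_rpow hx.le,
        Real.rpow_neg hx.le, inv_inv]
      rw [show x⁻¹ = x^(-1:ℝ) from (Real.rpow_neg_one x).symm]
      rw [show x^(-1:ℝ) * ((4:ℝ)^(-α) * x^α) = (4:ℝ)^(-α) * (x^(-1:ℝ) * x^α) by ring,
        ← Real.rpow_add hx]
      congr 2
      ring
    have halg : a * x ^ (α-1) ≤ (N:ℝ) * ((1 - Real.exp (-1:ℝ)) * ((C/2) * ((2*(N:ℝ))^(-α)))) := by
      have h0 : (0:ℝ) ≤ (1 - Real.exp (-1:ℝ)) * (C/2) := by nlinarith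
      calc a * x ^ (α-1)
          = ((1 - Real.exp (-1:ℝ)) * (C/2)) * ((4:ℝ)^(-α) * x^(α-1)) := by rw [hadef]; ring
        _ = ((1 - Real.exp (-1:ℝ)) * (C/2)) * (x⁻¹ * (4 * x⁻¹)^(-α)) := by rw [hid]
        _ ≤ ((1 - Real.exp (-1:ℝ)) * (C/2)) * ((N:ℝ) * ((2*(N:ℝ))^(-α))) :=
            mul_le_mul_of_nonneg_left hprod h0
        _ = (N:ℝ) * ((1 - Real.exp (-1:ℝ)) * ((C/2) * ((2*(N:ℝ))^(-α)))) := by ring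
    linarith
  -- final assembly
  set c₁ := (S * Real.exp (-1:ℝ) / b) ^ (1/(α-1)) with hc₁def
  set c₂ := (S / a) ^ (1/(α-1)) with hc₂def
  have hc₁pos : 0 < c₁ := Real.rpow_pos_of_pos (by positivity) _
  have hc₂pos : 0 < c₂ := Real.rpow_pos_of_pos (div_pos hSpos hapos) _
  set δ₀ := min 1 (a * x₀^(α-1) / (2*S)) with hδ₀def
  have hδ₀pos : 0 < δ₀ := lt_min one_pos (by positivity)
  have hmain : ∀ δ : ℝ, 0 < δ → δ ≤ δ₀ →
      c₁ * δ ^ (1/(α-1)) ≤ F (Real.log S - δ) ∧ F (Real.log S - δ) ≤ c₂ * δ ^ (1/(α-1)) := by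
    intro δ hδ hδδ₀
    set FF := F (Real.log S - δ) with hFFdef
    have hFFnn : 0 ≤ FF := hFnonneg _
    have hPFF : P FF = S * (1 - Real.exp (-δ)) := hkey δ hδ
    have hδ1 : δ ≤ 1 := le_trans hδδ₀ (min_le_left _ _)
    have h1e : 1 - Real.exp (-δ) ≤ δ := by
      have := Real.add_one_le_exp (-δ); linarith
    have h1e' : δ * Real.exp (-1:ℝ) ≤ 1 - Real.exp (-δ) := by
      have h2 := Real.add_one_le_exp δ
      have h3 : (δ+1) * Real.exp (-δ) ≤ 1 := by
        have h4 := mul_le_mul_of_nonneg_right h2 (Real.exp_pos (-δ)).le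
        rw [← Real.exp_add] at h4
        simp only [add_neg_cancel, Real.exp_zero] at h4
        linarith
      have h5 : Real.exp (-1:ℝ) ≤ Real.exp (-δ) := Real.exp_le_exp.mpr (by linarith)
      have h6 : δ * Real.exp (-1:ℝ) ≤ δ * Real.exp (-δ) := mul_le_mul_of_nonneg_left h5 hδ.le
      have h3' : δ * Real.exp (-δ) + Real.exp (-δ) ≤ 1 := by rw [add_mul, one_mul] at h3; linarith
      linarith
    have hδ₀2 : δ ≤ a * x₀^(α-1) / (2*S) := le_trans hδδ₀ (min_le_right _ _)
    have hPFF_le : P FF ≤ S * δ := by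
      rw [hPFF]; exact mul_le_mul_of_nonneg_left h1e hSpos.le
    have hFFx₀ : FF ≤ x₀ := by
      by_contra hcon
      push_neg at hcon
      have h1 : P x₀ ≤ P FF := hPmono x₀ FF hx₀pos.le hcon.le
      have h2 : a * x₀^(α-1) ≤ P x₀ := hlower x₀ hx₀pos le_rfl
      have h3 : S * δ ≤ a * x₀^(α-1) / 2 := by
        calc S * δ ≤ S * (a * x₀^(α-1) / (2*S)) := mul_le_mul_of_nonneg_left hδ₀2 hSpos.le
          _ = a * x₀^(α-1) / 2 := by field_simp
      have h4 : 0 < a * x₀^(α-1) := by positivity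
      linarith
    have hFFpos : 0 < FF := by
      rcases hFFnn.lt_or_eq with h | h
      · exact h
      · exfalso
        have hP0 : P 0 = 0 := by
          have : ∀ n : ℕ, K (n+1) * (1 - Real.exp (-(0:ℝ) * ((n:ℝ)+1))) = 0 := by
            intro n; simp
          rw [hPdef]
          simp only [this, tsum_zero]
        rw [← h] at hPFF
        rw [hP0] at hPFF
        have hlt : Real.exp (-δ) < 1 := Real.exp_lt_one_iff.mpr (by linarith)
        have : 0 < S * (1 - Real.exp (-δ)) := mul_pos hSpos (by linarith)
        linarith
    constructor
    · have hup : P FF ≤ b * FF^(α-1) := hupper FF hFFpos (le_trans hFFx₀ hx₀1)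
      have hlow : S * (δ * Real.exp (-1:ℝ)) ≤ P FF := by
        rw [hPFF]; exact mul_le_mul_of_nonneg_left h1e' hSpos.le
      have hkey2 : (S * Real.exp (-1:ℝ) / b) * δ ≤ FF^(α-1) := by
        rw [div_mul_eq_mul_div, div_le_iff₀ hbpos]
        calc S * Real.exp (-1:ℝ) * δ = S * (δ * Real.exp (-1:ℝ)) := by ring
          _ ≤ b * FF^(α-1) := le_trans hlow hup
          _ = FF^(α-1) * b := by ring
      have hstep := Real.rpow_le_rpow (by positivity) hkey2 (by positivity : (0:ℝ) ≤ 1/(α-1))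
      rw [Real.mul_rpow (by positivity) hδ.le] at hstep
      rw [← Real.rpow_mul hFFnn, mul_one_div, div_self hα0.ne', Real.rpow_one] at hstep
      exact hstep
    · have hlow2 : a * FF^(α-1) ≤ P FF := hlower FF hFFpos hFFx₀
      have hkey3 : FF^(α-1) ≤ (S/a) * δ := by
        rw [div_mul_eq_mul_div, le_div_iff₀ hapos]
        calc FF^(α-1) * a = a * FF^(α-1) := by ring
          _ ≤ S * δ := le_trans hlow2 hPFF_le
      have hstep := Real.rpow_le_rpow (Real.rpow_nonneg hFFnn _) hkey3
        (by positivity : (0:ℝ) ≤ 1/(α-1))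
      rw [Real.mul_rpow (by positivity) hδ.le] at hstep
      rw [← Real.rpow_mul hFFnn, mul_one_div, div_self hα0.ne', Real.rpow_one] at hstep
      exact hstep
  refine ⟨⟨c₁, c₂, δ₀, hc₁pos, hc₂pos, hδ₀pos, fun δ hδ hδ' => hmain δ hδ hδ'⟩, ?_⟩
  -- the tendsto statement
  have hβ : 0 < 1/(α-1) - 1 := by
    rw [sub_pos, lt_div_iff₀ hα0, one_mul]
    linarith
  apply squeeze_zero' (g := fun δ : ℝ => c₂ * δ^(1/(α-1) - 1))
  · filter_upwards [self_mem_nhdsWithin] with δ hδ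
    exact div_nonneg (hFnonneg _) (le_of_lt hδ)
  · have hev2 : ∀ᶠ δ : ℝ in nhdsWithin 0 (Set.Ioi 0), δ < δ₀ :=
      (eventually_lt_nhds hδ₀pos).filter_mono nhdsWithin_le_nhds
    filter_upwards [hev2, self_mem_nhdsWithin] with δ h1 h2
    have hδpos : (0:ℝ) < δ := h2
    have hδsplit : δ ^ (1/(α-1)-1) * δ ^ (1:ℝ) = δ ^ (1/(α-1)) := by
      rw [← Real.rpow_add hδpos]; congr 1; ring
    rw [div_le_iff₀ hδpos]
    calc F (Real.log S - δ) ≤ c₂ * δ^(1/(α-1)) := (hmain δ hδpos h1.le).2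
      _ = c₂ * δ^(1/(α-1)-1) * δ := by
          rw [mul_assoc, ← hδsplit, Real.rpow_one]
  · have h1 : Tendsto (fun δ:ℝ => δ^(1/(α-1)-1)) (nhds 0) (nhds 0) := by
      have hca : ContinuousAt (fun δ:ℝ => δ^(1/(α-1)-1)) 0 :=
        Real.continuousAt_rpow_const 0 _ (Or.inr hβ.le)
      have hne : (α-1)⁻¹ - 1 ≠ 0 := by rw [inv_eq_one_div]; exact hβ.ne'
      simpa [ContinuousAt, Real.zero_rpow hβ.ne', Real.zero_rpow hne] using hca
    have h2 := (h1.const_mul c₂).mono_left (nhdsWithin_le_nhds (s := Set.Ioi (0:ℝ)))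
    simpa using h2
end
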